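/- Assume K has characteristic 0 and let I ⊆ K[x_0, …, x_N] be the radical ideal of a finite nonempty set of distinct points in P^N. Let m, r ≥ 1 be integers. If any of the following holds: (i) m ≤ r ≤ N, or (ii) α(I^{(m)}) = m, or (iii) m ≤ r and r − m < N, then (α(I^{(m)}) + N − 1)/(m + N − 1) ≤ α(I^{(r)})/r. In particular, taking m = 1, if r ≤ N then (α(I) + N − 1)/N ≤ α(I^{(r)})/r. -/

import Mathlib

open MvPolynomial

noncomputable section

/-- The ideal generated by all homogeneous forms vanishing at the point with
coordinate vector `p`. -/
def homVanishingIdeal {K σ : Type*} [Field K] (p : σ → K) : Ideal (MvPolynomial σ K) :=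
  Ideal.span {F : MvPolynomial σ K | (∃ d, F.IsHomogeneous d) ∧ MvPolynomial.eval p F = 0}

/-- The `m`-th symbolic power of the radical ideal of the finite set of points
with coordinate vectors `P i`: the intersection of the `m`-th powers of the
ideals of the individual points. -/
def symbPow {K σ ι : Type*} [Field K] (P : ι → σ → K) (m : ℕ) : Ideal (MvPolynomial σ K) :=
  ⨅ i, homVanishingIdeal (P i) ^ m

/-- The irrelevant maximal ideal `M = (x_0, …, x_N)`. -/
def irrel (K σ : Type*) [Field K] : Ideal (MvPolynomial σ K) :=
  Ideal.span (Set.range (MvPolynomial.X : σ → MvPolynomial σ K))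

/-- The coordinate vectors `P i` are nonzero and represent pairwise distinct
points of projective space (no two are proportional). -/
def ProjectivelyDistinct {K σ ι : Type*} [Field K] (P : ι → σ → K) : Prop :=
  (∀ i, P i ≠ 0) ∧ Pairwise fun i j => ∀ c : K, P i ≠ c • P j

/-- `α(J)`: the least degree of a nonzero homogeneous element of `J`. -/
def idealAlpha {K σ : Type*} [Field K] (J : Ideal (MvPolynomial σ K)) : ℕ :=
  sInf {d : ℕ | ∃ F ∈ J, F ≠ 0 ∧ MvPolynomial.IsHomogeneous F d}

namespace Stmt18Aux

set_option linter.unusedSectionVars false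

variable {K : Type*} [Field K] {σ : Type*} [DecidableEq σ]

lemma coeff_pderiv (j : σ) (F : MvPolynomial σ K) (u : σ →₀ ℕ) :
    coeff u (pderiv j F) = ((u j + 1 : ℕ) : K) * coeff (u + Finsupp.single j 1) F := by
  induction F using MvPolynomial.induction_on' with
  | monomial s a =>
    rw [pderiv_monomial, coeff_monomial, coeff_monomial]
    by_cases h : s = u + Finsupp.single j 1
    · subst h
      rw [if_pos (add_tsub_cancel_right _ _), if_pos rfl]
      simp [mul_comm]
    · rw [if_neg h]
      by_cases h2 : s - Finsupp.single j 1 = u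
      · rw [if_pos h2]
        have hsj : s j = 0 := by
          by_contra hs
          apply h
          rw [← h2, tsub_add_cancel_of_le
            (Finsupp.single_le_iff.2 (Nat.one_le_iff_ne_zero.2 hs))]
        simp [hsj]
      · rw [if_neg h2]; ring
  | add p q hp hq => simp [coeff_add, hp, hq, mul_add]

lemma weight_single_one (j : σ) : (Finsupp.weight (1 : σ → ℕ)) (Finsupp.single j 1) = 1 := by
  simp [Finsupp.weight_apply, Finsupp.sum_single_index]

lemma isHomogeneous_pderiv {F : MvPolynomial σ K} {e : ℕ} (j : σ)
    (hF : F.IsHomogeneous (e + 1)) : (pderiv j F).IsHomogeneous e := by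
  intro u hu
  rw [coeff_pderiv] at hu
  have h2 : coeff (u + Finsupp.single j 1) F ≠ 0 := fun h => hu (by simp [h])
  have h3 := hF h2
  rw [map_add, weight_single_one] at h3
  omega

lemma exists_pderiv_ne_zero [CharZero K] {F : MvPolynomial σ K} {e : ℕ}
    (hF : F.IsHomogeneous (e + 1)) (h0 : F ≠ 0) : ∃ j, pderiv j F ≠ 0 := by
  obtain ⟨s, hs⟩ := MvPolynomial.support_nonempty.2 h0
  have hcs : coeff s F ≠ 0 := MvPolynomial.mem_support_iff.1 hs
  have hws := hF hcs
  have hsne : s ≠ 0 := by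
    rintro rfl
    rw [map_zero] at hws
    omega
  obtain ⟨j, hj⟩ : ∃ j, s j ≠ 0 := by
    by_contra hc
    push_neg at hc
    exact hsne (Finsupp.ext hc)
  refine ⟨j, fun h => ?_⟩
  have hco := coeff_pderiv j F (s - Finsupp.single j 1)
  rw [h, coeff_zero,
    tsub_add_cancel_of_le (Finsupp.single_le_iff.2 (Nat.one_le_iff_ne_zero.2 hj))] at hco
  exact (mul_ne_zero (Nat.cast_ne_zero.2 (Nat.succ_ne_zero _)) hcs) hco.symm

lemma pderiv_mem_pow {J : Ideal (MvPolynomial σ K)} (j : σ) :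
    ∀ (k : ℕ) (F : MvPolynomial σ K), F ∈ J ^ (k + 1) → pderiv j F ∈ J ^ k := by
  intro k
  induction k with
  | zero => intro F _; simp [Ideal.one_eq_top]
  | succ k ih =>
    intro F hF
    rw [pow_succ] at hF
    refine Submodule.mul_induction_on hF (fun a ha b hb => ?_) (fun x y hx hy => ?_)
    · rw [pderiv_mul]
      refine Ideal.add_mem _ ?_ (Ideal.mul_mem_right _ _ ha)
      exact pow_succ J k ▸ Ideal.mul_mem_mul (ih a ha) hb
    · rw [map_add]; exact Ideal.add_mem _ hx hy

lemma homVanishingIdeal_le_ker (p : σ → K) :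
    homVanishingIdeal p ≤ RingHom.ker (MvPolynomial.eval p) := by
  rw [homVanishingIdeal, Ideal.span_le]
  rintro F ⟨-, hF⟩
  exact hF

lemma eq_C_of_isHomogeneous_zero {F : MvPolynomial σ K} (h : F.IsHomogeneous 0) :
    F = C (coeff 0 F) := by
  ext d
  rw [coeff_C]
  by_cases hd : 0 = d
  · subst hd; simp
  · rw [if_neg hd]
    by_contra hc
    have h2 := h hc
    change (Finsupp.weight (fun _ => (1:ℕ))) d = 0 at h2
    rw [← Finsupp.degree_eq_weight_one, Finsupp.degree_eq_zero_iff] at h2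
    exact hd h2.symm

lemma eq_zero_of_isHomogeneous_zero {p : σ → K} {m : ℕ} (hm : m ≠ 0) {F : MvPolynomial σ K}
    (hhom : F.IsHomogeneous 0) (h : F ∈ homVanishingIdeal p ^ m) : F = 0 := by
  have h1 := eq_C_of_isHomogeneous_zero hhom
  have h2 : MvPolynomial.eval p F = 0 :=
    homVanishingIdeal_le_ker p (Ideal.pow_le_self hm h)
  rw [h1, eval_C] at h2
  rw [h1, h2, map_zero]

lemma exists_linear_form {N : ℕ} (hN : 1 ≤ N) (p : Fin (N + 1) → K) (hp : p ≠ 0) :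
    ∃ L : MvPolynomial (Fin (N + 1)) K,
      L ≠ 0 ∧ L.IsHomogeneous 1 ∧ L ∈ homVanishingIdeal p := by
  obtain ⟨k, hk⟩ := Function.ne_iff.1 hp
  simp only [Pi.zero_apply] at hk
  obtain ⟨j, hj⟩ : ∃ j : Fin (N + 1), j ≠ k := by
    rcases eq_or_ne k 0 with rfl | h
    · exact ⟨Fin.last N, by simp [Fin.ext_iff]; omega⟩
    · exact ⟨0, Ne.symm h⟩
  refine ⟨C (p k) * X j - C (p j) * X k, ?_, ?_, ?_⟩
  · intro h0
    have h1 := congrArg (coeff (Finsupp.single j 1)) h0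
    rw [coeff_sub, coeff_zero, coeff_C_mul, coeff_C_mul, coeff_X_same, coeff_X',
      if_neg (by simp [Finsupp.single_eq_single_iff, hj.symm])] at h1
    simp only [mul_one, mul_zero, sub_zero] at h1
    exact hk h1
  · exact (isHomogeneous_C_mul_X _ _).sub (isHomogeneous_C_mul_X _ _)
  · apply Ideal.subset_span
    refine ⟨⟨1, (isHomogeneous_C_mul_X _ _).sub (isHomogeneous_C_mul_X _ _)⟩, ?_⟩
    simp only [map_sub, map_mul, eval_C, eval_X]
    ring

lemma witness {N n : ℕ} (hN : 1 ≤ N) (P : Fin n → Fin (N + 1) → K)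
    (hP : ∀ i, P i ≠ 0) (m : ℕ) :
    ∃ F : MvPolynomial (Fin (N + 1)) K,
      F ≠ 0 ∧ F.IsHomogeneous (n * m) ∧ F ∈ symbPow P m := by
  choose L hL0 hLh hLm using fun i => exists_linear_form hN (P i) (hP i)
  refine ⟨(∏ i, L i) ^ m,
    pow_ne_zero _ (Finset.prod_ne_zero_iff.2 fun i _ => hL0 i), ?_, ?_⟩
  · have hprod : (∏ i, L i).IsHomogeneous n := by
      have h := MvPolynomial.IsHomogeneous.prod Finset.univ L (fun _ => 1)
        (fun i _ => hLh i)
      simpa using h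
    exact hprod.pow m
  · rw [symbPow]
    refine Ideal.mem_iInf.2 fun i => ?_
    refine Ideal.pow_mem_pow ?_ m
    obtain ⟨c, hc⟩ := Finset.dvd_prod_of_mem L (Finset.mem_univ i)
    rw [hc]
    exact Ideal.mul_mem_right _ _ (hLm i)

lemma descend [CharZero K] {N n : ℕ} (P : Fin n → Fin (N + 1) → K) (i0 : Fin n)
    {m : ℕ} (hm : 1 ≤ m) :
    ∀ (j : ℕ) (F : MvPolynomial (Fin (N + 1)) K) (d : ℕ), F ≠ 0 → F.IsHomogeneous d →
      F ∈ symbPow P (m + j) → ∃ (G : MvPolynomial (Fin (N + 1)) K) (e : ℕ),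
        G ≠ 0 ∧ G.IsHomogeneous e ∧ d = e + j ∧ G ∈ symbPow P m := by
  intro j
  induction j with
  | zero => exact fun F d h0 hh hmem => ⟨F, d, h0, hh, (d.add_zero).symm, hmem⟩
  | succ j ih =>
    intro F d h0 hh hmem
    cases d with
    | zero =>
      exact absurd (eq_zero_of_isHomogeneous_zero (by omega) hh
        (Ideal.mem_iInf.1 hmem i0)) h0
    | succ e =>
      obtain ⟨t, ht⟩ := exists_pderiv_ne_zero hh h0
      have hmem' : pderiv t F ∈ symbPow P (m + j) :=
        Ideal.mem_iInf.2 fun i =>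
          pderiv_mem_pow t (m + j) F (Ideal.mem_iInf.1 hmem i)
      obtain ⟨G, e2, hG0, hGh, hde, hGmem⟩ :=
        ih (pderiv t F) e ht (isHomogeneous_pderiv t hh) hmem'
      exact ⟨G, e2, hG0, hGh, by omega, hGmem⟩

lemma alpha_mem {N n : ℕ} (hN : 1 ≤ N) (P : Fin n → Fin (N + 1) → K)
    (hP : ∀ i, P i ≠ 0) (m : ℕ) :
    ∃ F ∈ symbPow P m, F ≠ 0 ∧ MvPolynomial.IsHomogeneous F (idealAlpha (symbPow P m)) := by
  have hne : {d : ℕ | ∃ F ∈ symbPow P m, F ≠ 0 ∧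
      MvPolynomial.IsHomogeneous F d}.Nonempty := by
    obtain ⟨F, h0, hh, hmem⟩ := witness hN P hP m
    exact ⟨n * m, F, hmem, h0, hh⟩
  exact Nat.sInf_mem hne

lemma alpha_step [CharZero K] {N n : ℕ} (hN : 1 ≤ N) (hn : 1 ≤ n)
    (P : Fin n → Fin (N + 1) → K) (hP : ∀ i, P i ≠ 0) {m r : ℕ}
    (hm : 1 ≤ m) (hmr : m ≤ r) :
    idealAlpha (symbPow P m) + (r - m) ≤ idealAlpha (symbPow P r) := by
  obtain ⟨F, hFmem, hF0, hFh⟩ := alpha_mem hN P hP r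
  have hmem' : F ∈ symbPow P (m + (r - m)) := by
    rw [Nat.add_sub_cancel' hmr]; exact hFmem
  obtain ⟨G, e, hG0, hGh, hde, hGmem⟩ :=
    descend P ⟨0, hn⟩ hm (r - m) F _ hF0 hFh hmem'
  have hle : idealAlpha (symbPow P m) ≤ e := Nat.sInf_le ⟨G, hGmem, hG0, hGh⟩
  omega

lemma alpha_pos {N n : ℕ} (hN : 1 ≤ N) (hn : 1 ≤ n)
    (P : Fin n → Fin (N + 1) → K) (hP : ∀ i, P i ≠ 0) {m : ℕ} (hm : 1 ≤ m) :
    1 ≤ idealAlpha (symbPow P m) := by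
  obtain ⟨F, hFmem, hF0, hFh⟩ := alpha_mem hN P hP m
  by_contra h
  have h0 : idealAlpha (symbPow P m) = 0 := by omega
  rw [h0] at hFh
  exact hF0 (eq_zero_of_isHomogeneous_zero (by omega) hFh
    (Ideal.mem_iInf.1 hFmem ⟨0, hn⟩))

end Stmt18Aux

/-- Char 0.  For the radical ideal `I` of a finite nonempty set of distinct
points of `P^N`, if `m, r ≥ 1` satisfy (i) `m ≤ r ≤ N`, or (ii) `α(I^{(m)}) = m`, or
(iii) `m ≤ r` and `r - m < N`, then `(α(I^{(m)}) + N - 1)/(m + N - 1) ≤ α(I^{(r)})/r`.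
In particular (m = 1), if `r ≤ N` then `(α(I) + N - 1)/N ≤ α(I^{(r)})/r`. -/
theorem stmt18 {K : Type*} [Field K] [IsAlgClosed K] [CharZero K]
    {N n : ℕ} (hN : 1 ≤ N) (hn : 1 ≤ n)
    (P : Fin n → (Fin (N + 1) → K)) (hP : ProjectivelyDistinct P) :
    (∀ m r : ℕ, 1 ≤ m → 1 ≤ r →
      ((m ≤ r ∧ r ≤ N) ∨ idealAlpha (symbPow P m) = m ∨ (m ≤ r ∧ r - m < N)) →
      ((idealAlpha (symbPow P m) : ℚ) + (N : ℚ) - 1) / ((m : ℚ) + (N : ℚ) - 1) ≤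
        (idealAlpha (symbPow P r) : ℚ) / (r : ℚ)) ∧
    (∀ r : ℕ, 1 ≤ r → r ≤ N →
      ((idealAlpha (symbPow P 1) : ℚ) + (N : ℚ) - 1) / (N : ℚ) ≤
        (idealAlpha (symbPow P r) : ℚ) / (r : ℚ)) := by
  have hP0 : ∀ i, P i ≠ 0 := hP.1
  have key : ∀ m r : ℕ, 1 ≤ m → 1 ≤ r →
      ((m ≤ r ∧ r ≤ N) ∨ idealAlpha (symbPow P m) = m ∨ (m ≤ r ∧ r - m < N)) →
      ((idealAlpha (symbPow P m) : ℚ) + (N : ℚ) - 1) / ((m : ℚ) + (N : ℚ) - 1) ≤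
        (idealAlpha (symbPow P r) : ℚ) / (r : ℚ) := by
    intro m r hm hr hcase
    set a := idealAlpha (symbPow P m) with ha
    set b := idealAlpha (symbPow P r) with hb
    have ham : m ≤ a := by
      have h1 := Stmt18Aux.alpha_pos hN hn P hP0 le_rfl
      have h2 := Stmt18Aux.alpha_step hN hn P hP0 le_rfl hm
      omega
    have hbr : r ≤ b := by
      have h1 := Stmt18Aux.alpha_pos hN hn P hP0 le_rfl
      have h2 := Stmt18Aux.alpha_step hN hn P hP0 le_rfl hr
      omega
    have hden : (0 : ℚ) < (m : ℚ) + (N : ℚ) - 1 := by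
      have : (1 : ℚ) ≤ (m : ℚ) := by exact_mod_cast hm
      have : (1 : ℚ) ≤ (N : ℚ) := by exact_mod_cast hN
      linarith [show (1 : ℚ) ≤ (m : ℚ) from by exact_mod_cast hm]
    have hrpos : (0 : ℚ) < (r : ℚ) := by exact_mod_cast hr
    rcases hcase with h | h | h
    · -- reduce to case (iii)
      have hmr : m ≤ r := h.1
      have hrN : r + 1 ≤ m + N := by omega
      have hab : a + r ≤ b + m := by
        have := Stmt18Aux.alpha_step hN hn P hP0 hm hmr
        omega
      rw [div_le_div_iff₀ hden hrpos]
      have c1 : (a : ℚ) + r ≤ (b : ℚ) + m := by exact_mod_cast hab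
      have c2 : (r : ℚ) + 1 ≤ (m : ℚ) + N := by exact_mod_cast hrN
      have c3 : (m : ℚ) ≤ a := by exact_mod_cast ham
      nlinarith
    · -- case (ii) : a = m
      rw [h]
      rw [div_self (ne_of_gt hden)]
      rw [le_div_iff₀ hrpos, one_mul]
      exact_mod_cast hbr
    · have hmr : m ≤ r := h.1
      have hrN : r + 1 ≤ m + N := by omega
      have hab : a + r ≤ b + m := by
        have := Stmt18Aux.alpha_step hN hn P hP0 hm hmr
        omega
      rw [div_le_div_iff₀ hden hrpos]
      have c1 : (a : ℚ) + r ≤ (b : ℚ) + m := by exact_mod_cast hab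
      have c2 : (r : ℚ) + 1 ≤ (m : ℚ) + N := by exact_mod_cast hrN
      have c3 : (m : ℚ) ≤ a := by exact_mod_cast ham
      nlinarith
  refine ⟨key, fun r hr hrN => ?_⟩
  have h := key 1 r le_rfl hr (Or.inl ⟨hr, hrN⟩)
  have heq : ((1 : ℕ) : ℚ) + (N : ℚ) - 1 = (N : ℚ) := by push_cast; ring
  rwa [heq] at h
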